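/- If γ > |β| > 0 and ᾱ = (3γ - √(9γ² - 8β²))/2, then there exist real numbers y_1, y_2, not both zero, such that y_1² + (2β/ᾱ) y_1 y_2 + y_2² = 0. -/

import Mathlib

theorem stmt12 (β γ : ℝ) (hβ : 0 < |β|) (hγ : |β| < γ) :
    ∃ y₁ y₂ : ℝ, ¬(y₁ = 0 ∧ y₂ = 0) ∧
      y₁ ^ 2 + (2 * β / ((3 * γ - Real.sqrt (9 * γ ^ 2 - 8 * β ^ 2)) / 2)) * y₁ * y₂
        + y₂ ^ 2 = 0 := by
  have hbne : β ≠ 0 := abs_pos.mp hβ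
  have hb2 : 0 < β ^ 2 := by positivity
  have hγ0 : 0 < γ := lt_trans hβ hγ
  have habs : |β| ^ 2 = β ^ 2 := sq_abs β
  have hβγ : β ^ 2 < γ ^ 2 := by nlinarith [sq_abs β]
  set s := Real.sqrt (9 * γ ^ 2 - 8 * β ^ 2) with hs
  have hs0 : 0 ≤ s := Real.sqrt_nonneg _
  have hssq : s ^ 2 = 9 * γ ^ 2 - 8 * β ^ 2 := Real.sq_sqrt (by nlinarith)
  have hslt : s < 3 * γ := by nlinarith
  have hsgt : |β| < s := by nlinarith [sq_abs β]
  set A := (3 * γ - s) / 2 with hA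
  have hA0 : 0 < A := by simp [hA]; linarith
  have hAle : A ≤ |β| := by
    rcases le_or_gt (3 * γ - 2 * |β|) 0 with h | h
    · simp [hA]; linarith
    · nlinarith [sq_abs β]
  set c := 2 * β / A with hc
  have hAne : A ≠ 0 := ne_of_gt hA0
  have hc2 : 4 ≤ c ^ 2 := by
    have hA2 : A ^ 2 ≤ β ^ 2 := by nlinarith [sq_abs β]
    have : c ^ 2 = 4 * β ^ 2 / A ^ 2 := by
      rw [hc]; ring
    rw [this, le_div_iff₀ (by positivity)]
    nlinarith
  have hd : 0 ≤ c ^ 2 - 4 := by linarith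
  have hroot : Real.sqrt (c ^ 2 - 4) ^ 2 = c ^ 2 - 4 := Real.sq_sqrt hd
  refine ⟨(-c + Real.sqrt (c ^ 2 - 4)) / 2, 1, by simp, ?_⟩
  nlinarith [hroot]
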